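/- Let m, n be integers with 3 ≤ m < n and gcd(m, n) = 1, and let F ∈ ℝ[t] be the polynomial satisfying F·U_{m−1}·U_{n−1} = U_{mn−1}. Then the map φ : ℝ → ℝ³ given by φ(t) = (T_m(t), T_n(t), F′(t)) is injective, and its derivative never vanishes: for every t ∈ ℝ, (T_m′(t), T_n′(t), F″(t)) ≠ (0, 0, 0) (indeed already (T_m′(t), T_n′(t)) ≠ (0,0)). Hence φ is a polynomial embedding of the real line in ℝ³. -/

import Mathlib

open Polynomial Polynomial.Chebyshev Real

namespace ChebAux

lemma T_eval_neg (k : ℕ) (t : ℝ) : (T ℝ k).eval (-t) = (-1)^k * (T ℝ k).eval t := by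
  induction k using Nat.twoStepInduction with
  | zero => simp
  | one => simp [T_one]
  | more k ih1 ih2 =>
    have hc : ((k + 2 : ℕ) : ℤ) = (k : ℤ) + 2 := by push_cast; ring
    have hc1 : ((k + 1 : ℕ) : ℤ) = (k : ℤ) + 1 := by push_cast; ring
    rw [hc, T_add_two, ← hc1] at *
    simp only [eval_sub, eval_mul, eval_ofNat, eval_X] at *
    rw [ih1, ih2]
    ring

lemma U_eval_neg (k : ℕ) (t : ℝ) : (U ℝ k).eval (-t) = (-1)^k * (U ℝ k).eval t := by
  induction k using Nat.twoStepInduction with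
  | zero => simp
  | one => simp [U_one]
  | more k ih1 ih2 =>
    have hc : ((k + 2 : ℕ) : ℤ) = (k : ℤ) + 2 := by push_cast; ring
    have hc1 : ((k + 1 : ℕ) : ℤ) = (k : ℤ) + 1 := by push_cast; ring
    rw [hc, U_add_two, ← hc1] at *
    simp only [eval_sub, eval_mul, eval_ofNat, eval_X] at *
    rw [ih1, ih2]
    ring

lemma U_pos (k : ℕ) (t : ℝ) (h : 1 ≤ t) :
    0 < (U ℝ k).eval t ∧ (U ℝ k).eval t ≤ (U ℝ (k + 1 : ℕ)).eval t := by
  induction k with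
  | zero => simp [U_one]; nlinarith
  | succ k ih =>
    obtain ⟨h1, h2⟩ := ih
    constructor
    · linarith
    · have hc : ((k + 2 : ℕ) : ℤ) = (k : ℤ) + 2 := by push_cast; ring
      have hc1 : ((k + 1 : ℕ) : ℤ) = (k : ℤ) + 1 := by push_cast; ring
      rw [hc, U_add_two, ← hc1]
      simp only [eval_sub, eval_mul, eval_ofNat, eval_X]
      nlinarith

lemma U_ne_zero (k : ℕ) (t : ℝ) (h : 1 ≤ |t|) : (U ℝ k).eval t ≠ 0 := by
  rcases abs_le.mp (le_refl |t|) with ⟨-, -⟩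
  rcases le_or_gt 1 t with ht | ht
  · exact ne_of_gt (U_pos k t ht).1
  · have ht' : 1 ≤ -t := by
      rcases abs_cases t with ⟨h1, h2⟩ | ⟨h1, h2⟩ <;> linarith
    have := U_pos k (-t) ht'
    have he : (U ℝ k).eval (-(-t)) = (-1)^k * (U ℝ k).eval (-t) := U_eval_neg k (-t)
    rw [neg_neg] at he
    rw [he]
    intro h0
    rcases mul_eq_zero.mp h0 with h0 | h0
    · have : ((-1:ℝ))^k ≠ 0 := by positivity
      exact this h0
    · exact ne_of_gt this.1 h0

lemma no_common_U_root (m n : ℕ) (hm : 1 ≤ m) (hn : 1 ≤ n) (hgcd : Nat.gcd m n = 1)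
    (t : ℝ) (h1 : (U ℝ ((m : ℤ) - 1)).eval t = 0) (h2 : (U ℝ ((n : ℤ) - 1)).eval t = 0) :
    False := by
  have hcm : ((m - 1 : ℕ) : ℤ) = (m : ℤ) - 1 := by
    have := hm; push_cast [Nat.cast_sub hm]; ring
  have hcn : ((n - 1 : ℕ) : ℤ) = (n : ℤ) - 1 := by
    push_cast [Nat.cast_sub hn]; ring
  have habs : |t| < 1 := by
    by_contra hc
    exact U_ne_zero (m - 1) t (not_lt.mp hc) (by rw [hcm]; exact h1)
  have habs' := abs_lt.mp habs
  set θ := Real.arccos t with hθdef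
  have hts : Real.cos θ = t := Real.cos_arccos (by linarith) (by linarith)
  have hθ0 : 0 < θ := Real.arccos_pos.mpr habs'.2
  have hθπ : θ < π := by
    have h := Real.arccos_le_pi t
    rcases h.lt_or_eq with h | h
    · exact h
    · exfalso
      have : Real.cos θ = -1 := by rw [hθdef, h]; exact Real.cos_pi
      rw [hts] at this; linarith
  have hs : Real.sin θ ≠ 0 := ne_of_gt (Real.sin_pos_of_pos_of_lt_pi hθ0 hθπ)
  have e1 : Real.sin ((m : ℝ) * θ) = 0 := by
    have hu := U_real_cos θ ((m : ℤ) - 1)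
    rw [hts, h1, zero_mul] at hu
    push_cast at hu
    rw [show ((m:ℝ) - 1 + 1) = (m:ℝ) by ring] at hu
    exact hu.symm
  have e2 : Real.sin ((n : ℝ) * θ) = 0 := by
    have hu := U_real_cos θ ((n : ℤ) - 1)
    rw [hts, h2, zero_mul] at hu
    push_cast at hu
    rw [show ((n:ℝ) - 1 + 1) = (n:ℝ) by ring] at hu
    exact hu.symm
  obtain ⟨a, ha⟩ := Real.sin_eq_zero_iff.mp e1
  obtain ⟨b, hb⟩ := Real.sin_eq_zero_iff.mp e2
  have hπ : (0:ℝ) < π := Real.pi_pos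
  have hreal : (n : ℝ) * a = (m : ℝ) * b := by
    have hc : ((n : ℝ) * a) * π = ((m : ℝ) * b) * π := by
      linear_combination (n : ℝ) * ha - (m : ℝ) * hb
    exact mul_right_cancel₀ (ne_of_gt hπ) hc
  have hint : (n : ℤ) * a = (m : ℤ) * b := by exact_mod_cast hreal
  have hco : IsCoprime (m : ℤ) (n : ℤ) := by
    rw [Int.isCoprime_iff_gcd_eq_one]
    simpa using hgcd
  have hdvd : (m : ℤ) ∣ a := by
    apply hco.dvd_of_dvd_mul_left
    exact ⟨b, by linear_combination hint⟩
  obtain ⟨c, hc⟩ := hdvd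
  apply hs
  have hθc : θ = (c : ℝ) * π := by
    have hm0 : (m : ℝ) ≠ 0 := by positivity
    have : (m : ℝ) * θ = (m : ℝ) * ((c : ℝ) * π) := by
      rw [← ha, hc]; push_cast; ring
    exact mul_left_cancel₀ hm0 this
  rw [hθc]
  exact Real.sin_int_mul_pi c

lemma T_strictMonoOn (k : ℕ) (hk : 1 ≤ k) :
    StrictMonoOn (fun x : ℝ => (T ℝ k).eval x) (Set.Ici 1) := by
  apply strictMonoOn_of_deriv_pos (convex_Ici 1)
  · exact ((T ℝ k).continuous_aeval).continuousOn
  · intro x hx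
    rw [interior_Ici] at hx
    rw [Polynomial.deriv, T_derivative_eq_U]
    have hc : ((k - 1 : ℕ) : ℤ) = (k : ℤ) - 1 := by push_cast [Nat.cast_sub hk]; ring
    rw [← hc]
    simp only [eval_mul, eval_intCast]
    have := (U_pos (k - 1) x (le_of_lt hx)).1
    have hk0 : (0:ℝ) < (k : ℝ) := by positivity
    push_cast
    nlinarith

lemma T_eval_one (k : ℕ) : (T ℝ k).eval 1 = 1 := by
  have := T_real_cos 0 (k : ℤ)
  simpa using this

lemma T_gt_one (k : ℕ) (hk : 1 ≤ k) (t : ℝ) (ht : 1 < t) : 1 < (T ℝ k).eval t := by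
  have h := T_strictMonoOn k hk (Set.self_mem_Ici) (Set.mem_Ici.mpr ht.le) ht
  simp only at h
  rwa [T_eval_one] at h

lemma T_abs_le_one (k : ℕ) (t : ℝ) (ht : |t| ≤ 1) : |(T ℝ k).eval t| ≤ 1 := by
  have h := abs_le.mp ht
  have hts : Real.cos (Real.arccos t) = t := Real.cos_arccos h.1 h.2
  rw [← hts, T_real_cos]
  exact Real.abs_cos_le_one _

lemma T_abs_gt_one (k : ℕ) (hk : 1 ≤ k) (t : ℝ) (ht : 1 < |t|) : 1 < |(T ℝ k).eval t| := by
  rcases lt_or_ge 1 t with h | h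
  · exact lt_of_lt_of_le (T_gt_one k hk t h) (le_abs_self _)
  · have hneg : 1 < -t := by
      rcases abs_cases t with ⟨h1, h2⟩ | ⟨h1, h2⟩ <;> linarith
    have he : (T ℝ k).eval t = (-1)^k * (T ℝ k).eval (-t) := by
      have h2 := T_eval_neg k (-t)
      rwa [neg_neg] at h2
    rw [he, abs_mul, abs_pow, abs_neg, abs_one, one_pow, one_mul]
    exact lt_of_lt_of_le (T_gt_one k hk (-t) hneg) (le_abs_self _)

lemma T_inj_of_one_lt (k : ℕ) (hk : 1 ≤ k) (t t' : ℝ) (ht : 1 < t) (ht' : 1 < t')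
    (h : (T ℝ k).eval t = (T ℝ k).eval t') : t = t' :=
  (T_strictMonoOn k hk).injOn (Set.mem_Ici.mpr ht.le) (Set.mem_Ici.mpr ht'.le) h

lemma Fderiv_eval (m n : ℕ) (hm : 1 ≤ m) (hn : 1 ≤ n) (F : Polynomial ℝ)
    (hF : F * (U ℝ ((m : ℤ) - 1) * U ℝ ((n : ℤ) - 1)) = U ℝ ((m : ℤ) * n - 1))
    (θ : ℝ) (hs : Real.sin θ ≠ 0) (hsm : Real.sin ((m:ℝ) * θ) ≠ 0)
    (hsn : Real.sin ((n:ℝ) * θ) ≠ 0) (hz : Real.sin ((m:ℝ) * n * θ) = 0) :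
    (Polynomial.derivative F).eval (Real.cos θ) *
      (Real.sin ((m:ℝ) * θ) * Real.sin ((n:ℝ) * θ))
      = -((m:ℝ) * n) * Real.cos ((m:ℝ) * n * θ) := by
  set g2 : ℝ → ℝ := fun φ => Real.sin φ / (Real.sin ((m:ℝ) * φ) * Real.sin ((n:ℝ) * φ))
    with hg2def
  -- eventual equality
  have hcont : Continuous fun φ : ℝ =>
      Real.sin φ * (Real.sin ((m:ℝ) * φ) * Real.sin ((n:ℝ) * φ)) := by fun_prop
  have hopen : IsOpen {φ : ℝ |
      Real.sin φ * (Real.sin ((m:ℝ) * φ) * Real.sin ((n:ℝ) * φ)) ≠ 0} :=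
    isOpen_compl_singleton.preimage hcont
  have hθmem : θ ∈ {φ : ℝ |
      Real.sin φ * (Real.sin ((m:ℝ) * φ) * Real.sin ((n:ℝ) * φ)) ≠ 0} := by
    simp only [Set.mem_setOf_eq]
    exact mul_ne_zero hs (mul_ne_zero hsm hsn)
  have hev : (fun φ => F.eval (Real.cos φ)) =ᶠ[nhds θ]
      fun φ => Real.sin ((m:ℝ) * n * φ) * g2 φ := by
    filter_upwards [hopen.mem_nhds hθmem] with φ hφ
    have hφs : Real.sin φ ≠ 0 := fun h => hφ (by rw [h]; ring)
    have hφm : Real.sin ((m:ℝ) * φ) ≠ 0 := fun h => hφ (by rw [h]; ring)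
    have hφn : Real.sin ((n:ℝ) * φ) ≠ 0 := fun h => hφ (by rw [h]; ring)
    have hUm := U_real_cos φ ((m : ℤ) - 1)
    have hUn := U_real_cos φ ((n : ℤ) - 1)
    have hUmn := U_real_cos φ ((m : ℤ) * n - 1)
    push_cast at hUm hUn hUmn
    rw [show ((m:ℝ) - 1 + 1) = (m:ℝ) by ring] at hUm
    rw [show ((n:ℝ) - 1 + 1) = (n:ℝ) by ring] at hUn
    rw [show ((m:ℝ) * n - 1 + 1) = (m:ℝ) * n by ring] at hUmn
    have hFe := congrArg (Polynomial.eval (Real.cos φ)) hF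
    simp only [eval_mul] at hFe
    have key : F.eval (Real.cos φ) *
        (Real.sin ((m:ℝ) * φ) * Real.sin ((n:ℝ) * φ)) =
        Real.sin ((m:ℝ) * n * φ) * Real.sin φ := by
      rw [← hUm, ← hUn, ← hUmn]
      linear_combination (Real.sin φ)^2 * hFe
    rw [hg2def]
    field_simp
    linear_combination key
  -- derivatives
  have h1 : HasDerivAt (fun φ => F.eval (Real.cos φ))
      ((Polynomial.derivative F).eval (Real.cos θ) * (-Real.sin θ)) θ :=
    (F.hasDerivAt (Real.cos θ)).comp θ (Real.hasDerivAt_cos θ)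
  have hg1 : HasDerivAt (fun φ => Real.sin ((m:ℝ) * n * φ))
      (Real.cos ((m:ℝ) * n * θ) * ((m:ℝ) * n)) θ := by
    have := (Real.hasDerivAt_sin ((m:ℝ) * n * θ)).comp θ
      ((hasDerivAt_id θ).const_mul ((m:ℝ) * n))
    simp only [mul_one] at this; exact this
  have hd2 : DifferentiableAt ℝ g2 θ := by
    apply DifferentiableAt.div
    · fun_prop
    · fun_prop
    · exact mul_ne_zero hsm hsn
  have hprod : HasDerivAt (fun φ => Real.sin ((m:ℝ) * n * φ) * g2 φ)
      (Real.cos ((m:ℝ) * n * θ) * ((m:ℝ) * n) * g2 θ +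
        Real.sin ((m:ℝ) * n * θ) * deriv g2 θ) θ :=
    hg1.mul hd2.hasDerivAt
  have hR : HasDerivAt (fun φ => F.eval (Real.cos φ))
      (Real.cos ((m:ℝ) * n * θ) * ((m:ℝ) * n) * g2 θ +
        Real.sin ((m:ℝ) * n * θ) * deriv g2 θ) θ :=
    hprod.congr_of_eventuallyEq hev
  have huniq := h1.unique hR
  rw [hz, zero_mul, add_zero, hg2def] at huniq
  simp only at huniq
  have hD : Real.sin ((m:ℝ) * θ) * Real.sin ((n:ℝ) * θ) ≠ 0 := mul_ne_zero hsm hsn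
  field_simp at huniq
  -- huniq : derivative F eval (cos θ) * (-sin θ) * (sin mθ * sin nθ) = cos(mnθ)*(mn)*sinθ (some arrangement)
  have h2 : ((Polynomial.derivative F).eval (Real.cos θ) *
      (Real.sin ((m:ℝ) * θ) * Real.sin ((n:ℝ) * θ))) * Real.sin θ =
      (-((m:ℝ) * n) * Real.cos ((m:ℝ) * n * θ)) * Real.sin θ := by
    linear_combination -(Real.sin θ) * huniq
  exact mul_right_cancel₀ hs h2

lemma mixed_case (m n : ℕ) (hm : 1 ≤ m) (hn : 1 ≤ n) (hgcd : Nat.gcd m n = 1)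
    (F : Polynomial ℝ)
    (hF : F * (U ℝ ((m : ℤ) - 1) * U ℝ ((n : ℤ) - 1)) = U ℝ ((m : ℤ) * n - 1))
    (θ θ' : ℝ) (hθ1 : 0 ≤ θ) (hθ2 : θ ≤ π) (hθ'1 : 0 ≤ θ') (hθ'2 : θ' ≤ π)
    (k l : ℤ) (hk : (m:ℝ) * θ' = 2 * k * π + m * θ) (hl : (n:ℝ) * θ' = 2 * l * π - n * θ)
    (hd : (Polynomial.derivative F).eval (Real.cos θ)
        = (Polynomial.derivative F).eval (Real.cos θ')) :
    Real.cos θ = Real.cos θ' := by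
  have hπ : (0:ℝ) < π := Real.pi_pos
  have hmR : ((m:ℝ)) ≠ 0 := by positivity
  have hnR : ((n:ℝ)) ≠ 0 := by positivity
  have hco : IsCoprime (n : ℤ) (m : ℤ) := by
    rw [Int.isCoprime_iff_gcd_eq_one]
    simpa [Int.gcd_comm] using hgcd
  have hco' : IsCoprime (m : ℤ) (n : ℤ) := hco.symm
  by_cases hmk : (m : ℤ) ∣ k
  · -- θ' = θ
    obtain ⟨j, rfl⟩ := hmk
    have hθθ' : θ' = θ + (j:ℝ) * (2 * π) := by
      have h : (m:ℝ) * θ' = (m:ℝ) * (θ + (j:ℝ) * (2 * π)) := by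
        push_cast at hk ⊢
        linarith
      exact mul_left_cancel₀ hmR h
    have hj : j = 0 := by
      by_contra hj0
      rcases lt_or_gt_of_ne hj0 with h | h
      · have h1 : j ≤ -1 := by omega
        have : (j:ℝ) ≤ -1 := by exact_mod_cast h1
        nlinarith
      · have : (1:ℝ) ≤ (j:ℝ) := by exact_mod_cast h
        nlinarith
    rw [hθθ', hj]
    norm_num
  · by_cases hnl : (n : ℤ) ∣ l
    · obtain ⟨j, rfl⟩ := hnl
      have hθθ' : θ' = -θ + (j:ℝ) * (2 * π) := by
        have h : (n:ℝ) * θ' = (n:ℝ) * (-θ + (j:ℝ) * (2 * π)) := by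
          push_cast at hl ⊢
          linarith
        exact mul_left_cancel₀ hnR h
      have hj0 : 0 ≤ j := by
        by_contra h
        push_neg at h
        have h1 : j ≤ -1 := by omega
        have : (j:ℝ) ≤ -1 := by exact_mod_cast h1
        nlinarith
      have hj1 : j ≤ 1 := by
        by_contra h
        push_neg at h
        have : (2:ℝ) ≤ (j:ℝ) := by exact_mod_cast h
        nlinarith
      interval_cases j
      · -- θ + θ' = 0, both zero
        push_cast at hθθ'
        have h0 : θ = 0 ∧ θ' = 0 := by constructor <;> linarith
        rw [h0.1, h0.2]
      · -- θ + θ' = 2π, both π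
        push_cast at hθθ'
        have h0 : θ = π ∧ θ' = π := by constructor <;> linarith
        rw [h0.1, h0.2]
    · exfalso
      have h3 : (m:ℝ) * n * θ = ((l:ℝ) * m - k * n) * π := by
        linear_combination ((m:ℝ) / 2) * hl - ((n:ℝ) / 2) * hk
      have h3' : (m:ℝ) * n * θ' = ((l:ℝ) * m + k * n) * π := by
        linear_combination ((m:ℝ) / 2) * hl + ((n:ℝ) / 2) * hk
      have hsm : Real.sin ((m:ℝ) * θ) ≠ 0 := by
        intro h0
        obtain ⟨a, ha⟩ := Real.sin_eq_zero_iff.mp h0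
        have hr : (n:ℝ) * a = (l:ℝ) * m - k * n := by
          have hc : ((n:ℝ) * a) * π = ((l:ℝ) * m - k * n) * π := by
            linear_combination (n:ℝ) * ha + h3
          exact mul_right_cancel₀ (ne_of_gt hπ) hc
        have hint : (n:ℤ) * a = l * m - k * n := by exact_mod_cast hr
        have hdvd : (n:ℤ) ∣ l * m := ⟨a + k, by linear_combination -hint⟩
        exact hnl (hco.dvd_of_dvd_mul_right hdvd)
      have hsn : Real.sin ((n:ℝ) * θ) ≠ 0 := by
        intro h0
        obtain ⟨b, hb⟩ := Real.sin_eq_zero_iff.mp h0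
        have hr : (m:ℝ) * b = (l:ℝ) * m - k * n := by
          have hc : ((m:ℝ) * b) * π = ((l:ℝ) * m - k * n) * π := by
            linear_combination (m:ℝ) * hb + h3
          exact mul_right_cancel₀ (ne_of_gt hπ) hc
        have hint : (m:ℤ) * b = l * m - k * n := by exact_mod_cast hr
        have hdvd : (m:ℤ) ∣ k * n := ⟨l - b, by linear_combination hint⟩
        exact hmk (hco'.dvd_of_dvd_mul_right hdvd)
      have hs : Real.sin θ ≠ 0 := by
        intro h0
        obtain ⟨c, hc⟩ := Real.sin_eq_zero_iff.mp h0
        apply hsm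
        have : (m:ℝ) * θ = ((m * c : ℤ) : ℝ) * π := by
          rw [← hc]; push_cast; ring
        rw [this]
        exact Real.sin_int_mul_pi _
      have hsm' : Real.sin ((m:ℝ) * θ') = Real.sin ((m:ℝ) * θ) := by
        rw [show (m:ℝ) * θ' = (m:ℝ) * θ + (k:ℝ) * (2 * π) by linarith [hk]]
        exact Real.sin_add_int_mul_two_pi _ k
      have hsn' : Real.sin ((n:ℝ) * θ') = -Real.sin ((n:ℝ) * θ) := by
        rw [show (n:ℝ) * θ' = -((n:ℝ) * θ) + (l:ℝ) * (2 * π) by linarith [hl]]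
        rw [Real.sin_add_int_mul_two_pi, Real.sin_neg]
      have hs' : Real.sin θ' ≠ 0 := by
        intro h0
        obtain ⟨c, hc⟩ := Real.sin_eq_zero_iff.mp h0
        apply hsm
        rw [← hsm']
        have : (m:ℝ) * θ' = ((m * c : ℤ) : ℝ) * π := by
          rw [← hc]; push_cast; ring
        rw [this]
        exact Real.sin_int_mul_pi _
      have hzθ : Real.sin ((m:ℝ) * n * θ) = 0 := by
        have he : (m:ℝ) * n * θ = ((l * m - k * n : ℤ) : ℝ) * π := by
          push_cast
          linarith [h3]
        rw [he]
        exact Real.sin_int_mul_pi _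
      have hzθ' : Real.sin ((m:ℝ) * n * θ') = 0 := by
        have he : (m:ℝ) * n * θ' = ((l * m + k * n : ℤ) : ℝ) * π := by
          push_cast
          linarith [h3']
        rw [he]
        exact Real.sin_int_mul_pi _
      have hcc : Real.cos ((m:ℝ) * n * θ') = Real.cos ((m:ℝ) * n * θ) := by
        have he : (m:ℝ) * n * θ' = (m:ℝ) * n * θ + ((k * n : ℤ) : ℝ) * (2 * π) := by
          push_cast
          linarith [h3, h3']
        rw [he]
        exact Real.cos_add_int_mul_two_pi _ _
      have H1 := Fderiv_eval m n hm hn F hF θ hs hsm hsn hzθ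
      have H2 := Fderiv_eval m n hm hn F hF θ' hs'
        (by rw [hsm']; exact hsm) (by rw [hsn']; simpa using hsn) hzθ'
      rw [← hd, hsm', hsn', hcc] at H2
      have hE0 : Real.cos ((m:ℝ) * n * θ) = 0 := by
        have hsum : (-((m:ℝ) * n) * Real.cos ((m:ℝ) * n * θ)) * 2 = 0 := by
          linear_combination -H1 - H2
        have hmn : (0:ℝ) < (m:ℝ) * n := by positivity
        have h5 : -((m:ℝ) * n) * Real.cos ((m:ℝ) * n * θ) = 0 := by linarith
        rcases mul_eq_zero.mp h5 with h6 | h6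
        · exfalso; rw [neg_eq_zero] at h6; linarith
        · exact h6
      have hsq := Real.sin_sq_add_cos_sq ((m:ℝ) * n * θ)
      rw [hzθ, hE0] at hsq
      norm_num at hsq

lemma kn_eq_lm (m n : ℕ) (hgcd : Nat.gcd m n = 1) (k l : ℤ)
    (h : (k:ℝ) * n = (l:ℝ) * m) : ∃ j : ℤ, k = m * j := by
  have hint : k * (n:ℤ) = l * m := by exact_mod_cast h
  have hco : IsCoprime (m : ℤ) (n : ℤ) := by
    rw [Int.isCoprime_iff_gcd_eq_one]; simpa using hgcd
  have hdvd : (m:ℤ) ∣ k * n := ⟨l, by linear_combination hint⟩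
  obtain ⟨j, hj⟩ := hco.dvd_of_dvd_mul_right hdvd
  exact ⟨j, hj⟩

lemma same_plus (m n : ℕ) (hm : 1 ≤ m) (hn : 1 ≤ n) (hgcd : Nat.gcd m n = 1)
    (θ θ' : ℝ) (hθ1 : 0 ≤ θ) (hθ2 : θ ≤ π) (hθ'1 : 0 ≤ θ') (hθ'2 : θ' ≤ π)
    (k l : ℤ) (hk : (m:ℝ) * θ' = 2 * k * π + m * θ) (hl : (n:ℝ) * θ' = 2 * l * π + n * θ) :
    θ' = θ := by
  have hπ : (0:ℝ) < π := Real.pi_pos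
  have hmR : ((m:ℝ)) ≠ 0 := by positivity
  have hkl : (k:ℝ) * n = (l:ℝ) * m := by
    have hc : ((k:ℝ) * n) * (2 * π) = ((l:ℝ) * m) * (2 * π) := by
      linear_combination (m:ℝ) * hl - (n:ℝ) * hk
    exact mul_right_cancel₀ (by positivity) hc
  obtain ⟨j, rfl⟩ := kn_eq_lm m n hgcd k l hkl
  have hθθ' : θ' = θ + (j:ℝ) * (2 * π) := by
    have h : (m:ℝ) * θ' = (m:ℝ) * (θ + (j:ℝ) * (2 * π)) := by
      push_cast at hk ⊢; linarith
    exact mul_left_cancel₀ hmR h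
  have hj : j = 0 := by
    by_contra hj0
    rcases lt_or_gt_of_ne hj0 with h | h
    · have h1 : j ≤ -1 := by omega
      have : (j:ℝ) ≤ -1 := by exact_mod_cast h1
      nlinarith
    · have : (1:ℝ) ≤ (j:ℝ) := by exact_mod_cast h
      nlinarith
  rw [hθθ', hj]
  norm_num

lemma same_minus (m n : ℕ) (hm : 1 ≤ m) (hn : 1 ≤ n) (hgcd : Nat.gcd m n = 1)
    (θ θ' : ℝ) (hθ1 : 0 ≤ θ) (hθ2 : θ ≤ π) (hθ'1 : 0 ≤ θ') (hθ'2 : θ' ≤ π)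
    (k l : ℤ) (hk : (m:ℝ) * θ' = 2 * k * π - m * θ) (hl : (n:ℝ) * θ' = 2 * l * π - n * θ) :
    Real.cos θ = Real.cos θ' := by
  have hπ : (0:ℝ) < π := Real.pi_pos
  have hmR : ((m:ℝ)) ≠ 0 := by positivity
  have hkl : (k:ℝ) * n = (l:ℝ) * m := by
    have hc : ((k:ℝ) * n) * (2 * π) = ((l:ℝ) * m) * (2 * π) := by
      linear_combination (m:ℝ) * hl - (n:ℝ) * hk
    exact mul_right_cancel₀ (by positivity) hc
  obtain ⟨j, rfl⟩ := kn_eq_lm m n hgcd k l hkl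
  have hθθ' : θ' = -θ + (j:ℝ) * (2 * π) := by
    have h : (m:ℝ) * θ' = (m:ℝ) * (-θ + (j:ℝ) * (2 * π)) := by
      push_cast at hk ⊢; linarith
    exact mul_left_cancel₀ hmR h
  have hj0 : 0 ≤ j := by
    by_contra h
    push_neg at h
    have h1 : j ≤ -1 := by omega
    have : (j:ℝ) ≤ -1 := by exact_mod_cast h1
    nlinarith
  have hj1 : j ≤ 1 := by
    by_contra h
    push_neg at h
    have : (2:ℝ) ≤ (j:ℝ) := by exact_mod_cast h
    nlinarith
  interval_cases j
  · push_cast at hθθ'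
    have h0 : θ = 0 ∧ θ' = 0 := by constructor <;> linarith
    rw [h0.1, h0.2]
  · push_cast at hθθ'
    have h0 : θ = π ∧ θ' = π := by constructor <;> linarith
    rw [h0.1, h0.2]

end ChebAux

open ChebAux

theorem chebyshev_alternating_knot_embedding (m n : ℕ) (hm : 3 ≤ m) (hmn : m < n)
    (hgcd : Nat.gcd m n = 1)
    (F : Polynomial ℝ)
    (hF : F * (U ℝ ((m : ℤ) - 1) * U ℝ ((n : ℤ) - 1)) = U ℝ ((m : ℤ) * n - 1)) :
    Function.Injective (fun t : ℝ =>
      ((T ℝ m).eval t, (T ℝ n).eval t, (Polynomial.derivative F).eval t)) ∧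
    (∀ t : ℝ,
      ((Polynomial.derivative (T ℝ m)).eval t, (Polynomial.derivative (T ℝ n)).eval t,
        (Polynomial.derivative (Polynomial.derivative F)).eval t) ≠ (0, 0, 0)) ∧
    (∀ t : ℝ,
      ((Polynomial.derivative (T ℝ m)).eval t, (Polynomial.derivative (T ℝ n)).eval t)
        ≠ (0, 0)) := by
  have hm1 : 1 ≤ m := by omega
  have hn1 : 1 ≤ n := by omega
  have part3 : ∀ t : ℝ,
      ((Polynomial.derivative (T ℝ m)).eval t, (Polynomial.derivative (T ℝ n)).eval t)
        ≠ (0, 0) := by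
    intro t h
    rw [Prod.mk.injEq] at h
    obtain ⟨ha, hb⟩ := h
    rw [T_derivative_eq_U] at ha hb
    simp only [eval_mul, eval_intCast] at ha hb
    have hmR : (((m:ℤ)):ℝ) ≠ 0 := by push_cast; positivity
    have hnR : (((n:ℤ)):ℝ) ≠ 0 := by push_cast; positivity
    have ha' : (U ℝ ((m:ℤ) - 1)).eval t = 0 := by
      rcases mul_eq_zero.mp ha with h | h
      · exact absurd h hmR
      · exact h
    have hb' : (U ℝ ((n:ℤ) - 1)).eval t = 0 := by
      rcases mul_eq_zero.mp hb with h | h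
      · exact absurd h hnR
      · exact h
    exact no_common_U_root m n hm1 hn1 hgcd t ha' hb'
  refine ⟨?_, fun t h => part3 t (by
    have := congrArg (fun p => (p.1, p.2.1)) h
    simpa using this), part3⟩
  intro t t' h
  simp only [Prod.mk.injEq] at h
  obtain ⟨h1, h2, h3⟩ := h
  by_cases hta : |t| ≤ 1 <;> by_cases hta' : |t'| ≤ 1
  · -- both in [-1, 1]
    have hb := abs_le.mp hta
    have hb' := abs_le.mp hta'
    set θ := Real.arccos t with hθdef
    set θ' := Real.arccos t' with hθ'def
    have hts : Real.cos θ = t := Real.cos_arccos hb.1 hb.2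
    have hts' : Real.cos θ' = t' := Real.cos_arccos hb'.1 hb'.2
    have hθ1 : 0 ≤ θ := Real.arccos_nonneg t
    have hθ2 : θ ≤ π := Real.arccos_le_pi t
    have hθ'1 : 0 ≤ θ' := Real.arccos_nonneg t'
    have hθ'2 : θ' ≤ π := Real.arccos_le_pi t'
    rw [← hts, ← hts'] at h1 h2 h3
    rw [T_real_cos, T_real_cos] at h1 h2
    push_cast at h1 h2
    rw [← hts, ← hts']
    rcases Real.cos_eq_cos_iff.mp h1 with ⟨k, hk | hk⟩ <;>
      rcases Real.cos_eq_cos_iff.mp h2 with ⟨l, hl | hl⟩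
    · rw [same_plus m n hm1 hn1 hgcd θ θ' hθ1 hθ2 hθ'1 hθ'2 k l hk hl]
    · exact mixed_case m n hm1 hn1 hgcd F hF θ θ' hθ1 hθ2 hθ'1 hθ'2 k l hk
        (by linarith [hl]) h3
    · -- minus for m, plus for n : swap roles
      have hF2 : F * (U ℝ ((n : ℤ) - 1) * U ℝ ((m : ℤ) - 1)) = U ℝ ((n : ℤ) * m - 1) := by
        rw [mul_comm (U ℝ ((n:ℤ) - 1))]
        rw [show ((n:ℤ) * m - 1) = ((m:ℤ) * n - 1) by ring]
        exact hF
      exact mixed_case n m hn1 hm1 (by rwa [Nat.gcd_comm]) F hF2 θ θ' hθ1 hθ2 hθ'1 hθ'2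
        l k hl (by linarith [hk]) h3
    · exact same_minus m n hm1 hn1 hgcd θ θ' hθ1 hθ2 hθ'1 hθ'2 k l
        (by linarith [hk]) (by linarith [hl])
  · -- |t| ≤ 1 < |t'|
    exfalso
    have := T_abs_le_one m t hta
    have := T_abs_gt_one m hm1 t' (not_le.mp hta')
    rw [← h1] at this
    linarith
  · exfalso
    have := T_abs_le_one m t' hta'
    have := T_abs_gt_one m hm1 t (not_le.mp hta)
    rw [h1] at this
    linarith
  · -- both outside [-1, 1]
    have ht : 1 < |t| := not_le.mp hta
    have ht' : 1 < |t'| := not_le.mp hta'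
    have hodd : Odd m ∨ Odd n := by
      by_contra h
      push_neg at h
      rw [Nat.not_odd_iff_even, Nat.not_odd_iff_even] at h
      have : 2 ∣ Nat.gcd m n := Nat.dvd_gcd h.1.two_dvd h.2.two_dvd
      omega
    rcases abs_cases t with ⟨he, hsign⟩ | ⟨he, hsign⟩ <;>
      rcases abs_cases t' with ⟨he', hsign'⟩ | ⟨he', hsign'⟩
    · -- both > 1
      exact T_inj_of_one_lt m hm1 t t' (by linarith) (by linarith) h1
    · -- t > 1, t' < -1
      exfalso
      obtain ⟨k, hk1, hodd'⟩ : ∃ k : ℕ, 1 ≤ k ∧ Odd k ∧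
          ((T ℝ k).eval t = (T ℝ k).eval t') := by
        rcases hodd with ho | ho
        · exact ⟨m, hm1, ho, h1⟩
        · exact ⟨n, hn1, ho, h2⟩
      obtain ⟨hoddk, heq⟩ := hodd'
      have hgt : 1 < (T ℝ k).eval t := T_gt_one k hk1 t (by linarith)
      have hlt : (T ℝ k).eval t' < -1 := by
        have hneg : 1 < -t' := by linarith
        have hev := T_eval_neg k (-t')
        rw [neg_neg] at hev
        rw [hev, hoddk.neg_one_pow]
        have := T_gt_one k hk1 (-t') hneg
        linarith
      rw [heq] at hgt
      linarith
    · -- t < -1, t' > 1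
      exfalso
      obtain ⟨k, hk1, hodd'⟩ : ∃ k : ℕ, 1 ≤ k ∧ Odd k ∧
          ((T ℝ k).eval t = (T ℝ k).eval t') := by
        rcases hodd with ho | ho
        · exact ⟨m, hm1, ho, h1⟩
        · exact ⟨n, hn1, ho, h2⟩
      obtain ⟨hoddk, heq⟩ := hodd'
      have hgt : 1 < (T ℝ k).eval t' := T_gt_one k hk1 t' (by linarith)
      have hlt : (T ℝ k).eval t < -1 := by
        have hneg : 1 < -t := by linarith
        have hev := T_eval_neg k (-t)
        rw [neg_neg] at hev
        rw [hev, hoddk.neg_one_pow]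
        have := T_gt_one k hk1 (-t) hneg
        linarith
      rw [← heq] at hgt
      linarith
    · -- both < -1
      have hneg : 1 < -t := by linarith
      have hneg' : 1 < -t' := by linarith
      have hev := T_eval_neg m (-t)
      have hev' := T_eval_neg m (-t')
      rw [neg_neg] at hev hev'
      have hp : ((-1:ℝ))^m ≠ 0 := by positivity
      have heq : (T ℝ m).eval (-t) = (T ℝ m).eval (-t') :=
        mul_left_cancel₀ hp (by rw [← hev, ← hev']; exact h1)
      have := T_inj_of_one_lt m hm1 (-t) (-t') hneg hneg' heq
      linarith
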